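/- Every ε-free context-free language is recognised by an L(/→)-grammar with / -only types: starting from a CFG in Greibach Normal Form, assign A ∈ f(a) for each production A → a, and (⋯((A/Bₙ)/Bₙ₋₁)/⋯)/B₁ ∈ f(a) for each production A → aB₁⋯Bₙ. -/

import Mathlib

/-- slash-only types over primitives `P`. `div β α` denotes `β/α`. -/
inductive Tp (P : Type) : Type
  | pr : P → Tp P
  | div : Tp P → Tp P → Tp P

open Tp

/-- The calculus L(/→) with Cut: Axiom, rule (/→), Cut. -/
inductive Der {P : Type} : List (Tp P) → Tp P → Prop
  | ax (α : Tp P) : Der [α] α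
  | slash {Γ Δ Θ : List (Tp P)} {α β γ : Tp P} :
      Der Γ α → Der (Δ ++ β :: Θ) γ → Der (Δ ++ div β α :: (Γ ++ Θ)) γ
  | cut {Γ Θ Δ : List (Tp P)} {α β : Tp P} :
      Der (Γ ++ α :: Θ) β → Der Δ α → Der (Γ ++ (Δ ++ Θ)) β

/-- Cut-free L(/→): only Axiom and (/→). -/
inductive DerCF {P : Type} : List (Tp P) → Tp P → Prop
  | ax (α : Tp P) : DerCF [α] α
  | slash {Γ Δ Θ : List (Tp P)} {α β γ : Tp P} :
      DerCF Γ α → DerCF (Δ ++ β :: Θ) γ → DerCF (Δ ++ div β α :: (Γ ++ Θ)) γ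

/-- `mk δ [β₁, ..., βₙ] = (⋯((δ/βₙ)/βₙ₋₁)/⋯)/β₁`. -/
def mk {P : Type} (δ : Tp P) : List (Tp P) → Tp P
  | [] => δ
  | b :: bs => div (mk δ bs) b

/-- Degree: number of occurrences of `/`. -/
def deg {P : Type} : Tp P → ℕ
  | pr _ => 0
  | div a b => deg a + deg b + 1

/-- A Lambek grammar over slash-only types: primitive types `P`, alphabet `V`,
distinguished primitive type `S`, finite type assignment `f`. -/
structure LGrammar (P V : Type) where
  S : P
  f : V → Set (Tp P)
  fin : ∀ a : V, (f a).Finite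

/-- The language recognised by a Lambek grammar. -/
def LGrammar.Lang {P V : Type} (G : LGrammar P V) : Set (List V) :=
  {w | ∃ Γ : List (Tp P), List.Forall₂ (fun a α => α ∈ G.f a) w Γ ∧ Der Γ (pr G.S)}

/-! ### Auxiliary material -/

section Aux

variable {T : Type} {G : ContextFreeGrammar.{0} T}

/-- Language-model semantics of slash types. -/
def sem (G : ContextFreeGrammar T) : Tp G.NT → Set (List T)
  | pr A => {w | G.Derives [Symbol.nonterminal A] (w.map Symbol.terminal)}
  | div β α => {w | ∀ v ∈ sem G α, w ++ v ∈ sem G β}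

/-- Semantics of a list of types: concatenation. -/
def semL (G : ContextFreeGrammar T) : List (Tp G.NT) → Set (List T)
  | [] => {[]}
  | α :: Γ => {w | ∃ u v, u ∈ sem G α ∧ v ∈ semL G Γ ∧ w = u ++ v}

lemma semL_append : ∀ (Γ Δ : List (Tp G.NT)) (w : List T),
    w ∈ semL G (Γ ++ Δ) ↔ ∃ u v, u ∈ semL G Γ ∧ v ∈ semL G Δ ∧ w = u ++ v := by
  intro Γ
  induction Γ with
  | nil =>
    intro Δ w
    constructor
    · intro h; exact ⟨[], w, rfl, h, rfl⟩
    · rintro ⟨u, v, hu, hv, rfl⟩; cases hu; simpa using hv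
  | cons α Γ ih =>
    intro Δ w
    constructor
    · rintro ⟨u, v, hu, hv, rfl⟩
      rcases (ih Δ v).1 hv with ⟨x, y, hx, hy, rfl⟩
      exact ⟨u ++ x, y, ⟨u, x, hu, hx, rfl⟩, hy, by simp⟩
    · rintro ⟨u, v, ⟨x, y, hx, hy, rfl⟩, hv, rfl⟩
      exact ⟨x, y ++ v, hx, (ih Δ _).2 ⟨y, v, hy, hv, rfl⟩, by simp⟩

/-- Soundness of `Der` in the language model. -/
lemma der_sound {Γ : List (Tp G.NT)} {γ : Tp G.NT} (h : Der Γ γ) :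
    ∀ w ∈ semL G Γ, w ∈ sem G γ := by
  induction h with
  | ax α =>
    rintro w ⟨u, v, hu, hv, rfl⟩
    cases hv; simpa using hu
  | @slash Γ Δ Θ α β γ h1 h2 ih1 ih2 =>
    intro w hw
    rcases (semL_append _ _ _).1 hw with ⟨d, v, hd, hv, rfl⟩
    rcases hv with ⟨s, v', hs, hv', rfl⟩
    rcases (semL_append _ _ _).1 hv' with ⟨g, t, hg, ht, rfl⟩
    have hsg : s ++ g ∈ sem G β := hs g (ih1 g hg)
    have : d ++ ((s ++ g) ++ t) ∈ sem G γ :=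
      ih2 _ ((semL_append Δ (β :: Θ) _).2 ⟨d, (s ++ g) ++ t, hd, ⟨s ++ g, t, hsg, ht, rfl⟩, rfl⟩)
    simpa [List.append_assoc] using this
  | @cut Γ Θ Δ α β h1 h2 ih1 ih2 =>
    intro w hw
    rcases (semL_append _ _ _).1 hw with ⟨g, v, hg, hv, rfl⟩
    rcases (semL_append _ _ _).1 hv with ⟨d, t, hd, ht, rfl⟩
    have hd' : d ∈ sem G α := ih2 d hd
    have : g ++ (d ++ t) ∈ sem G β :=
      ih1 _ ((semL_append Γ (α :: Θ) _).2 ⟨g, d ++ t, hg, ⟨d, t, hd', ht, rfl⟩, rfl⟩)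
    simpa [List.append_assoc] using this

lemma mem_sem_mk {A : G.NT} : ∀ (Bs : List G.NT) (u : List T),
    G.Derives [Symbol.nonterminal A]
      (u.map Symbol.terminal ++ Bs.map Symbol.nonterminal) →
    u ∈ sem G (mk (pr A) (Bs.map pr)) := by
  intro Bs
  induction Bs with
  | nil => intro u h; simpa [mk, sem] using h
  | cons B Bs ih =>
    intro u h
    intro v hv
    apply ih
    have hv' : G.Derives [Symbol.nonterminal B] (v.map Symbol.terminal) := hv
    have step : G.Derives
        (u.map Symbol.terminal ++ ([Symbol.nonterminal B] ++ Bs.map Symbol.nonterminal))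
        (u.map Symbol.terminal ++ (v.map Symbol.terminal ++ Bs.map Symbol.nonterminal)) :=
      (hv'.append_right _).append_left _
    have h' := h.trans (by simpa [List.append_assoc] using step)
    simpa [List.append_assoc] using h'

/-! ### Counted derivations and decomposition -/

/-- `n`-step derivation. -/
def DerIn (G : ContextFreeGrammar T) : ℕ → List (Symbol T G.NT) → List (Symbol T G.NT) → Prop
  | 0, u, v => u = v
  | n + 1, u, v => ∃ w, G.Produces u w ∧ DerIn G n w v

lemma derIn_tail : ∀ n {u v w : List (Symbol T G.NT)},
    DerIn G n u v → G.Produces v w → DerIn G (n + 1) u w := by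
  intro n
  induction n with
  | zero => intro u v w h hp; cases h; exact ⟨w, hp, rfl⟩
  | succ n ih =>
    rintro u v w ⟨x, hx, hd⟩ hp
    exact ⟨x, hx, ih hd hp⟩

lemma derives_derIn {u v : List (Symbol T G.NT)} (h : G.Derives u v) :
    ∃ n, DerIn G n u v := by
  induction h with
  | refl => exact ⟨0, rfl⟩
  | tail _ hp ih => rcases ih with ⟨n, hn⟩; exact ⟨n + 1, derIn_tail n hn hp⟩

lemma rewrites_split {N : Type} {r : ContextFreeRule T N} :
    ∀ {u v w : List (Symbol T N)}, r.Rewrites (u ++ v) w →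
      (∃ u', r.Rewrites u u' ∧ w = u' ++ v) ∨ (∃ v', r.Rewrites v v' ∧ w = u ++ v') := by
  intro u
  induction u with
  | nil => intro v w h; exact Or.inr ⟨w, h, rfl⟩
  | cons x u ih =>
    intro v w h
    cases h with
    | head s =>
      exact Or.inl ⟨r.output ++ u, ContextFreeRule.Rewrites.head u, by simp⟩
    | cons y h' =>
      rcases ih h' with ⟨u', hu', rfl⟩ | ⟨v', hv', rfl⟩
      · exact Or.inl ⟨x :: u', ContextFreeRule.Rewrites.cons x hu', rfl⟩
      · exact Or.inr ⟨v', hv', rfl⟩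

lemma rewrites_nonterminal_mem {N : Type} {r : ContextFreeRule T N}
    {u v : List (Symbol T N)} (h : r.Rewrites u v) :
    Symbol.nonterminal r.input ∈ u := by
  rcases h.exists_parts with ⟨p, q, rfl, -⟩
  simp

lemma derIn_terminal {w : List T} : ∀ {n} {v : List (Symbol T G.NT)},
    DerIn G n (w.map Symbol.terminal) v → v = w.map Symbol.terminal := by
  intro n
  induction n with
  | zero => intro v h; exact h.symm
  | succ n _ =>
    rintro v ⟨x, ⟨r, _, hr⟩, _⟩
    exfalso
    have := rewrites_nonterminal_mem hr
    rcases List.mem_map.1 this with ⟨t, -, ht⟩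
    cases ht

lemma derIn_split : ∀ (n : ℕ) (u v w : List (Symbol T G.NT)),
    DerIn G n (u ++ v) w →
    ∃ n₁ n₂ w₁ w₂, n₁ + n₂ = n ∧ w = w₁ ++ w₂ ∧ DerIn G n₁ u w₁ ∧ DerIn G n₂ v w₂ := by
  intro n
  induction n with
  | zero =>
    intro u v w h
    exact ⟨0, 0, u, v, rfl, h.symm, rfl, rfl⟩
  | succ n ih =>
    rintro u v w ⟨x, ⟨r, hrmem, hr⟩, hd⟩
    rcases rewrites_split hr with ⟨u', hu', rfl⟩ | ⟨v', hv', rfl⟩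
    · rcases ih u' v w hd with ⟨n₁, n₂, w₁, w₂, hn, rfl, h₁, h₂⟩
      exact ⟨n₁ + 1, n₂, w₁, w₂, by omega, rfl,
        ⟨u', ⟨r, hrmem, hu'⟩, h₁⟩, h₂⟩
    · rcases ih u v' w hd with ⟨n₁, n₂, w₁, w₂, hn, rfl, h₁, h₂⟩
      exact ⟨n₁, n₂ + 1, w₁, w₂, by omega, rfl,
        h₁, ⟨v', ⟨r, hrmem, hv'⟩, h₂⟩⟩

lemma derIn_split_nts : ∀ (Bs : List G.NT) (n : ℕ) (w : List T),
    DerIn G n (Bs.map Symbol.nonterminal) (w.map Symbol.terminal) →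
    ∃ ws : List (List T), w = ws.flatten ∧
      List.Forall₂ (fun B wi => ∃ m, m ≤ n ∧
        DerIn G m [Symbol.nonterminal B] (wi.map Symbol.terminal)) Bs ws := by
  intro Bs
  induction Bs with
  | nil =>
    intro n w h
    have h0 := derIn_terminal (w := ([] : List T)) (by simpa using h)
    have hw : w = [] := by
      cases w with
      | nil => rfl
      | cons a w => simp at h0
    exact ⟨[], by simp [hw], List.Forall₂.nil⟩
  | cons B Bs ih =>
    intro n w h
    have h' : DerIn G n ([Symbol.nonterminal B] ++ Bs.map Symbol.nonterminal)
        (w.map Symbol.terminal) := by simpa using h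
    rcases derIn_split n _ _ _ h' with ⟨n₁, n₂, w₁, w₂, hn, hw, h₁, h₂⟩
    rcases List.map_eq_append_iff.1 hw with ⟨a, b, rfl, ha, hb⟩
    rcases ih n₂ b (hb.symm ▸ h₂) with ⟨ws, rfl, hws⟩
    refine ⟨a :: ws, by simp, List.Forall₂.cons ⟨n₁, by omega, ha ▸ h₁⟩ ?_⟩
    exact hws.imp (fun B wi ⟨m, hm, hd⟩ => ⟨m, by omega, hd⟩)

/-! ### Building Lambek derivations -/

lemma der_mk {P : Type} {δ : Tp P} :
    ∀ {Bs : List P} {Γs : List (List (Tp P))},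
      List.Forall₂ (fun B Γ => Der Γ (pr B)) Bs Γs →
      Der (mk δ (Bs.map pr) :: Γs.flatten) δ := by
  intro Bs Γs h
  induction h with
  | nil => exact Der.ax δ
  | @cons B Γ Bs Γs hBΓ _ ih =>
    have := Der.slash (Δ := []) (Θ := Γs.flatten) hBΓ ih
    simpa [mk] using this

lemma assemble {P : Type} {f : T → Set (Tp P)} :
    ∀ {Bs : List P} {ws : List (List T)},
      List.Forall₂ (fun B wi => ∃ Γ, List.Forall₂ (fun a α => α ∈ f a) wi Γ ∧ Der Γ (pr B))
        Bs ws →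
      ∃ Γs : List (List (Tp P)),
        List.Forall₂ (List.Forall₂ (fun a α => α ∈ f a)) ws Γs ∧
        List.Forall₂ (fun B Γ => Der Γ (pr B)) Bs Γs := by
  intro Bs ws h
  induction h with
  | nil => exact ⟨[], List.Forall₂.nil, List.Forall₂.nil⟩
  | cons hx _ ih =>
    rcases hx with ⟨Γ, hΓ, hd⟩
    rcases ih with ⟨Γs, h1, h2⟩
    exact ⟨Γ :: Γs, List.Forall₂.cons hΓ h1, List.Forall₂.cons hd h2⟩

/-- Main extraction: from a counted CFG derivation, produce a Lambek derivation. -/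
lemma extract (G : ContextFreeGrammar T)
    (hGNF : ∀ r ∈ G.rules, ∃ (a : T) (Bs : List G.NT),
      r.output = Symbol.terminal a :: Bs.map Symbol.nonterminal)
    (LG : LGrammar G.NT T)
    (hf : ∀ a : T, LG.f a =
      {α | ∃ r ∈ G.rules, ∃ Bs : List G.NT,
        r.output = Symbol.terminal a :: Bs.map Symbol.nonterminal ∧
        α = mk (pr r.input) (Bs.map pr)}) :
    ∀ n A (w : List T), DerIn G n [Symbol.nonterminal A] (w.map Symbol.terminal) →
      ∃ Γ, List.Forall₂ (fun a α => α ∈ LG.f a) w Γ ∧ Der Γ (pr A) := by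
  intro n
  induction n using Nat.strong_induction_on with
  | _ n ih =>
    intro A w h
    match n, h with
    | 0, h =>
      exfalso
      cases w with
      | nil => simp [DerIn] at h
      | cons a w => simp [DerIn] at h
    | n + 1, ⟨x, ⟨r, hrmem, hr⟩, hd⟩ =>
      obtain ⟨hA, rfl⟩ : r.input = A ∧ x = r.output := by
        cases hr with
        | head s => exact ⟨rfl, by simp⟩
        | cons y h' => cases h'
      rcases hGNF r hrmem with ⟨a, Bs, hout⟩
      rw [hout] at hd
      have hd' : DerIn G n ([Symbol.terminal a] ++ Bs.map Symbol.nonterminal)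
          (w.map Symbol.terminal) := by simpa using hd
      rcases derIn_split n _ _ _ hd' with ⟨n₁, n₂, w₁, w₂, hn, hw, h₁, h₂⟩
      have hw₁ : w₁ = [Symbol.terminal a] := by
        simpa using derIn_terminal (w := [a]) (by simpa using h₁)
      subst hw₁
      have hwa : w.map Symbol.terminal = Symbol.terminal a :: w₂ := by simpa using hw
      cases w with
      | nil => simp at hwa
      | cons b w' =>
        simp only [List.map_cons, List.cons.injEq] at hwa
        obtain ⟨hba, hw₂⟩ := hwa
        have hba' : b = a := by cases hba; rfl
        subst hba'
        rcases derIn_split_nts Bs n₂ w' (hw₂ ▸ h₂) with ⟨ws, rfl, hws⟩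
        have hws' : List.Forall₂ (fun B wi => ∃ Γ,
            List.Forall₂ (fun a α => α ∈ LG.f a) wi Γ ∧ Der Γ (pr B)) Bs ws := by
          refine hws.imp ?_
          rintro B wi ⟨m, hm, hdm⟩
          exact ih m (by omega) B wi hdm
        rcases assemble hws' with ⟨Γs, hΓs1, hΓs2⟩
        refine ⟨mk (pr A) (Bs.map pr) :: Γs.flatten, ?_, der_mk hΓs2⟩
        refine List.Forall₂.cons ?_ (List.rel_flatten hΓs1)
        rw [hf]
        exact ⟨r, hrmem, Bs, hout, by rw [hA]⟩

end Aux

/-- Every ε-free context-free language (given by a grammar in Greibach Normal Form) is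
recognised by the L(/→)-grammar assigning `A ∈ f a` for `A → a` and
`(⋯((A/Bₙ)/⋯)/B₁ ∈ f a` for `A → aB₁⋯Bₙ`. -/
theorem gnf_to_lambek {T : Type} (G : ContextFreeGrammar T)
    (hGNF : ∀ r ∈ G.rules, ∃ (a : T) (Bs : List G.NT),
      r.output = Symbol.terminal a :: Bs.map Symbol.nonterminal)
    (LG : LGrammar G.NT T) (hS : LG.S = G.initial)
    (hf : ∀ a : T, LG.f a =
      {α | ∃ r ∈ G.rules, ∃ Bs : List G.NT,
        r.output = Symbol.terminal a :: Bs.map Symbol.nonterminal ∧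
        α = mk (pr r.input) (Bs.map pr)}) :
    LG.Lang = G.language := by
  ext w
  constructor
  · rintro ⟨Γ, hΓ, hder⟩
    -- soundness direction
    have hmem : ∀ {w : List T} {Γ : List (Tp G.NT)},
        List.Forall₂ (fun a α => α ∈ LG.f a) w Γ → w ∈ semL G Γ := by
      intro w Γ h
      induction h with
      | nil => exact rfl
      | @cons a α w' Γ' ha _ ih =>
        refine ⟨[a], w', ?_, ih, rfl⟩
        rw [hf] at ha
        rcases ha with ⟨r, hrmem, Bs, hout, rfl⟩
        apply mem_sem_mk
        have : G.Produces [Symbol.nonterminal r.input] r.output :=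
          ⟨r, hrmem, ContextFreeRule.Rewrites.input_output⟩
        rw [hout] at this
        exact this.single
    have := der_sound hder w (hmem hΓ)
    rw [hS] at this
    exact this
  · intro hw
    rcases derives_derIn hw with ⟨n, hn⟩
    rcases extract G hGNF LG hf n G.initial w hn with ⟨Γ, h1, h2⟩
    exact ⟨Γ, h1, hS ▸ h2⟩
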